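/- Both the subspace of C_k(ω*,ω*) consisting of all restrictions to ω* of Stone–Čech extensions of injective maps ℕ → ℕ, and the subspace consisting of all restrictions to ω* of Stone–Čech extensions of finite-to-one maps ℕ → ℕ, are Baire spaces in the subspace topology. -/

import Mathlib

/-- `ω*`, the Stone–Čech remainder of the natural numbers. -/
abbrev OmegaStar : Type := {x : StoneCech ℕ // x ∉ Set.range stoneCechUnit}

/-- The Stone–Čech extension `βφ : StoneCech ℕ → StoneCech ℕ` of a map `φ : ℕ → ℕ`. -/
noncomputable def betaExtend (φ : ℕ → ℕ) : StoneCech ℕ → StoneCech ℕ :=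
  stoneCechExtend (continuous_stoneCechUnit.comp continuous_of_discreteTopology (f := φ))

/-- `f ∈ C(ω*, ω*)` is the restriction of `βφ` to `ω*`. -/
def IsRestrictionOfBetaExtend (φ : ℕ → ℕ) (f : C(OmegaStar, OmegaStar)) : Prop :=
  ∀ x : OmegaStar, betaExtend φ (x : StoneCech ℕ) = (f x : StoneCech ℕ)

open Filter Set Function Topology

noncomputable def toU : StoneCech ℕ → Ultrafilter ℕ :=
  stoneCechExtend (continuous_of_discreteTopology (f := (pure : ℕ → Ultrafilter ℕ)))

noncomputable def ofU : Ultrafilter ℕ → StoneCech ℕ := Ultrafilter.extend stoneCechUnit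

lemma continuous_toU : Continuous toU := continuous_stoneCechExtend _
lemma continuous_ofU : Continuous ofU := continuous_ultrafilter_extend _

lemma toU_unit (n : ℕ) : toU (stoneCechUnit n) = pure n :=
  congrFun (stoneCechExtend_extends _) n

lemma ofU_pure (n : ℕ) : ofU (pure n) = stoneCechUnit n :=
  congrFun (ultrafilter_extend_extends _) n

lemma toU_ofU (u : Ultrafilter ℕ) : toU (ofU u) = u := by
  have : toU ∘ ofU = id := by
    refine denseRange_pure.equalizer (continuous_toU.comp continuous_ofU) continuous_id ?_
    funext n
    simp [Function.comp, ofU_pure, toU_unit]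
  exact congrFun this u

lemma ofU_toU (x : StoneCech ℕ) : ofU (toU x) = x := by
  have : ofU ∘ toU = id := by
    refine stoneCech_hom_ext (continuous_ofU.comp continuous_toU) continuous_id ?_
    funext n
    simp [Function.comp, toU_unit, ofU_pure]
  exact congrFun this x

lemma continuous_ultrafilter_map (φ : ℕ → ℕ) :
    Continuous (Ultrafilter.map φ : Ultrafilter ℕ → Ultrafilter ℕ) := by
  rw [show (Ultrafilter.topologicalSpace : TopologicalSpace (Ultrafilter ℕ))
    = TopologicalSpace.generateFrom (ultrafilterBasis ℕ) from rfl] at *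
  refine continuous_generateFrom_iff.2 ?_
  rintro s ⟨A, rfl⟩
  have : Ultrafilter.map φ ⁻¹' {u | A ∈ u} = {u : Ultrafilter ℕ | φ ⁻¹' A ∈ u} := by
    ext u; simp [Ultrafilter.mem_map]
  rw [this]
  exact ultrafilter_isOpen_basic _

lemma toU_betaExtend (φ : ℕ → ℕ) (x : StoneCech ℕ) :
    toU (betaExtend φ x) = (toU x).map φ := by
  have : toU ∘ betaExtend φ = (Ultrafilter.map φ) ∘ toU := by
    refine stoneCech_hom_ext (continuous_toU.comp (continuous_stoneCechExtend _))
      ((continuous_ultrafilter_map φ).comp continuous_toU) ?_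
    funext n
    have h1 : betaExtend φ (stoneCechUnit n) = stoneCechUnit (φ n) :=
      congrFun (stoneCechExtend_extends _) n
    simp [Function.comp, h1, toU_unit]
  exact congrFun this x

lemma finite_not_mem_toU {x : StoneCech ℕ} (hx : x ∉ Set.range stoneCechUnit)
    {F : Set ℕ} (hF : F.Finite) : F ∉ toU x := by
  intro h
  obtain ⟨n, -, hn⟩ := Ultrafilter.eq_pure_of_finite_mem hF h
  exact hx ⟨n, by rw [← ofU_pure, ← hn, ofU_toU]⟩

lemma not_mem_range_unit_of_cofinite {u : Ultrafilter ℕ} (hu : ↑u ≤ (cofinite : Filter ℕ)) :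
    ofU u ∉ Set.range stoneCechUnit := by
  rintro ⟨n, hn⟩
  have : u = pure n := by
    have := congrArg toU hn
    rwa [toU_ofU, toU_unit, eq_comm] at this
  have h1 : ({n}ᶜ : Set ℕ) ∈ u := hu (by simp [Set.finite_singleton])
  rw [this] at h1
  simp at h1

/-- basic (cl)open subsets of `ω*`. -/
def BB (A : Set ℕ) : Set OmegaStar := {x | A ∈ toU x.1}

lemma isOpen_BB (A : Set ℕ) : IsOpen (BB A) :=
  (ultrafilter_isOpen_basic A).preimage (continuous_toU.comp continuous_subtype_val)

lemma isClosed_BB (A : Set ℕ) : IsClosed (BB A) :=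
  (ultrafilter_isClosed_basic A).preimage (continuous_toU.comp continuous_subtype_val)

lemma isOpen_range_unit : IsOpen (Set.range (stoneCechUnit : ℕ → StoneCech ℕ)) := by
  have : Set.range (stoneCechUnit : ℕ → StoneCech ℕ)
      = ⋃ n : ℕ, toU ⁻¹' {u : Ultrafilter ℕ | ({n} : Set ℕ) ∈ u} := by
    ext x
    simp only [Set.mem_range, Set.mem_iUnion, Set.mem_preimage, Set.mem_setOf_eq]
    constructor
    · rintro ⟨n, rfl⟩; exact ⟨n, by simp [toU_unit]⟩
    · rintro ⟨n, hn⟩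
      obtain ⟨m, hm, he⟩ := Ultrafilter.eq_pure_of_finite_mem (Set.finite_singleton n) hn
      exact ⟨m, by rw [← ofU_pure, ← he, ofU_toU]⟩
  rw [this]
  exact isOpen_iUnion fun n => (ultrafilter_isOpen_basic _).preimage continuous_toU

instance : CompactSpace OmegaStar :=
  isCompact_iff_compactSpace.1 isOpen_range_unit.isClosed_compl.isCompact

lemma isCompact_BB (A : Set ℕ) : IsCompact (BB A) := (isClosed_BB A).isCompact

lemma exists_omega_of_cofinite (u : Ultrafilter ℕ) (hu : ↑u ≤ (cofinite : Filter ℕ)) :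
    ∃ x : OmegaStar, toU x.1 = u :=
  ⟨⟨ofU u, not_mem_range_unit_of_cofinite hu⟩, toU_ofU u⟩

lemma exists_omega_mem {A : Set ℕ} (hA : A.Infinite) : ∃ x : OmegaStar, A ∈ toU x.1 := by
  have hne : (cofinite ⊓ 𝓟 A).NeBot := by
    rw [Filter.inf_principal_neBot_iff]
    intro U hU
    exact ((hA.diff hU).mono (by simp [Set.diff_eq, Set.inter_comm])).nonempty
  obtain ⟨x, hx⟩ := exists_omega_of_cofinite (Ultrafilter.of (cofinite ⊓ 𝓟 A))
    ((Ultrafilter.of_le _).trans inf_le_left)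
  refine ⟨x, ?_⟩
  rw [hx]
  exact le_principal_iff.1 ((Ultrafilter.of_le _).trans inf_le_right)

/-- finite-to-one -/
def FTO (φ : ℕ → ℕ) : Prop := ∀ m : ℕ, (φ ⁻¹' {m}).Finite

lemma FTO.of_injective {φ : ℕ → ℕ} (h : Function.Injective φ) : FTO φ := fun m =>
  Set.Subsingleton.finite fun a ha b hb => h (ha.trans hb.symm)

lemma FTO.preimage_finite {φ : ℕ → ℕ} (hφ : FTO φ) {E : Set ℕ} (hE : E.Finite) :
    (φ ⁻¹' E).Finite := by
  have : φ ⁻¹' E = ⋃ m ∈ E, φ ⁻¹' {m} := by ext a; simp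
  rw [this]
  exact hE.biUnion fun m _ => hφ m

lemma FTO.image_infinite {φ : ℕ → ℕ} (hφ : FTO φ) {A : Set ℕ} (hA : A.Infinite) :
    (φ '' A).Infinite := by
  intro hfin
  exact hA ((hφ.preimage_finite hfin).subset (Set.subset_preimage_image φ A))

lemma np_toU (x : OmegaStar) {F : Set ℕ} (hF : F.Finite) : F ∉ toU x.1 :=
  finite_not_mem_toU x.2 hF

lemma betaExtend_mem_omega {φ : ℕ → ℕ} (hφ : FTO φ) (x : OmegaStar) :
    betaExtend φ x.1 ∉ Set.range stoneCechUnit := by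
  rintro ⟨n, hn⟩
  have h1 : toU (betaExtend φ x.1) = pure n := by rw [← hn, toU_unit]
  rw [toU_betaExtend] at h1
  have h2 : φ ⁻¹' {n} ∈ toU x.1 := by
    have : ({n} : Set ℕ) ∈ (toU x.1).map φ := by rw [h1]; simp
    exact this
  exact np_toU x (hφ n) h2

/-- the canonical element of `C(ω*, ω*)` induced by a finite-to-one `φ`. -/
noncomputable def rmap {φ : ℕ → ℕ} (hφ : FTO φ) : C(OmegaStar, OmegaStar) :=
  ⟨fun x => ⟨betaExtend φ x.1, betaExtend_mem_omega hφ x⟩,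
    ((continuous_stoneCechExtend _).comp continuous_subtype_val).subtype_mk _⟩

lemma isRestriction_rmap {φ : ℕ → ℕ} (hφ : FTO φ) :
    IsRestrictionOfBetaExtend φ (rmap hφ) := fun _ => rfl

lemma toU_apply {φ : ℕ → ℕ} {f : C(OmegaStar, OmegaStar)}
    (hf : IsRestrictionOfBetaExtend φ f) (x : OmegaStar) :
    toU (f x).1 = (toU x.1).map φ := by
  rw [← hf x, toU_betaExtend]

/-- membership characterization for the subbasic sets. -/
lemma mapsTo_BB_iff {φ : ℕ → ℕ} (hφ : FTO φ) {f : C(OmegaStar, OmegaStar)}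
    (hf : IsRestrictionOfBetaExtend φ f) (A B : Set ℕ) :
    Set.MapsTo f (BB A) (BB B) ↔ (φ '' A \ B).Finite := by
  constructor
  · intro h
    by_contra hinf
    rw [← Set.not_infinite, not_not] at hinf
    set A' := A ∩ φ ⁻¹' Bᶜ with hA'
    have hsub : φ '' A \ B ⊆ φ '' A' := by
      rintro m ⟨⟨a, ha, rfl⟩, hnb⟩
      exact ⟨a, ⟨ha, hnb⟩, rfl⟩
    have hA'inf : A'.Infinite := by
      intro hfin
      exact hinf ((hfin.image φ).subset hsub)
    obtain ⟨x, hx⟩ := exists_omega_mem hA'inf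
    have hxA : x ∈ BB A := Filter.mem_of_superset hx Set.inter_subset_left
    have hfB : B ∈ (toU x.1).map φ := by
      have := h hxA
      rwa [← toU_apply hf]
    have hBc : φ ⁻¹' Bᶜ ∈ toU x.1 :=
      Filter.mem_of_superset hx Set.inter_subset_right
    have : Bᶜ ∈ (toU x.1).map φ := hBc
    rw [Ultrafilter.compl_mem_iff_notMem] at this
    exact this hfB
  · intro hfin x hx
    have hu : A ∈ toU x.1 := hx
    have key : A \ φ ⁻¹' B ⊆ φ ⁻¹' (φ '' A \ B) := by
      rintro a ⟨ha, hb⟩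
      exact ⟨⟨a, ha, rfl⟩, hb⟩
    have hnot : A \ φ ⁻¹' B ∉ toU x.1 := fun h =>
      np_toU x (hφ.preimage_finite hfin) (Filter.mem_of_superset h key)
    have : (A \ φ ⁻¹' B) ∪ φ ⁻¹' B ∈ toU x.1 :=
      Filter.mem_of_superset hu (by intro a ha; by_cases h : a ∈ φ ⁻¹' B <;> simp [h, ha])
    have hB : φ ⁻¹' B ∈ toU x.1 :=
      (Ultrafilter.union_mem_iff.1 this).resolve_left hnot
    show B ∈ (toU (f x).1)
    rw [toU_apply hf]
    exact hB

lemma toU_injective : Function.Injective toU := fun x y h => by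
  rw [← ofU_toU x, ← ofU_toU y, h]

/-- every nonprincipal ultrafilter containing `φ '' A` is the image of one containing `A`. -/
lemma BB_image_subset {φ : ℕ → ℕ} (hφ : FTO φ) {f : C(OmegaStar, OmegaStar)}
    (hf : IsRestrictionOfBetaExtend φ f) (A : Set ℕ) :
    BB (φ '' A) ⊆ f '' BB A := by
  classical
  intro x hx
  set u := toU x.1 with hu
  have hAu : φ '' A ∈ u := hx
  set s : ℕ → ℕ := fun m => if h : m ∈ φ '' A then h.choose else 0 with hs
  have hsA : ∀ m ∈ φ '' A, s m ∈ A ∧ φ (s m) = m := by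
    intro m hm
    simp only [hs, dif_pos hm]
    exact ⟨hm.choose_spec.1, hm.choose_spec.2⟩
  set v := u.map s with hv
  have hAv : A ∈ v := show s ⁻¹' A ∈ u from Filter.mem_of_superset hAu (fun m hm => (hsA m hm).1)
  have hmapv : v.map φ = u := by
    ext B
    have h1 : B ∈ v.map φ ↔ (fun m => φ (s m)) ⁻¹' B ∈ u := Iff.rfl
    rw [h1]
    constructor
    · intro h
      have h2 : (fun m => φ (s m)) ⁻¹' B ∩ (φ '' A) ∈ u := Filter.inter_mem h hAu
      exact Filter.mem_of_superset h2 (by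
        rintro m ⟨hmB, hmA⟩
        have : φ (s m) ∈ B := hmB
        rwa [(hsA m hmA).2] at this)
    · intro h
      have h2 : B ∩ (φ '' A) ∈ u := Filter.inter_mem h hAu
      exact Filter.mem_of_superset h2 (by
        rintro m ⟨hmB, hmA⟩
        show φ (s m) ∈ B
        rwa [(hsA m hmA).2])
  have hnpv : ∀ F : Set ℕ, F.Finite → F ∉ v := by
    intro F hF hFv
    have h2 : s ⁻¹' F ∩ (φ '' A) ∈ u := Filter.inter_mem hFv hAu
    refine np_toU x ?_ h2
    refine Set.Finite.of_finite_image (f := s) (hF.subset ?_) ?_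
    · rintro m ⟨a, ⟨ha, -⟩, rfl⟩
      exact ha
    · rintro a ⟨ha, haA⟩ b ⟨hb, hbA⟩ hab
      have : φ (s a) = φ (s b) := by rw [hab]
      rwa [(hsA a haA).2, (hsA b hbA).2] at this
  have hvle : (↑v : Filter ℕ) ≤ cofinite := by
    intro V hV
    rw [Filter.mem_cofinite] at hV
    by_contra h
    exact hnpv _ hV ((Ultrafilter.compl_mem_iff_notMem).2 h)
  obtain ⟨y, hy⟩ := exists_omega_of_cofinite v hvle
  refine ⟨y, show A ∈ toU y.1 by rw [hy]; exact hAv, ?_⟩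
  apply Subtype.ext
  apply toU_injective
  rw [toU_apply hf, hy, hmapv]

/-- basic neighborhoods in `ω*`. -/
lemma exists_BB_subset {x : OmegaStar} {O : Set OmegaStar} (hO : IsOpen O) (hx : x ∈ O) :
    ∃ A : Set ℕ, A ∈ toU x.1 ∧ BB A ⊆ O := by
  obtain ⟨O', hO', rfl⟩ := isOpen_induced_iff.1 hO
  have hO'' : IsOpen (ofU ⁻¹' O') := hO'.preimage continuous_ofU
  have hxO'' : toU x.1 ∈ ofU ⁻¹' O' := by
    rw [Set.mem_preimage, ofU_toU]
    exact hx
  obtain ⟨b, hb, hxb, hbsub⟩ := ultrafilterBasis_is_basis.exists_subset_of_mem_open hxO'' hO''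
  obtain ⟨A, rfl⟩ := hb
  refine ⟨A, hxb, ?_⟩
  intro y hy
  have : toU y.1 ∈ ofU ⁻¹' O' := hbsub hy
  rwa [Set.mem_preimage, ofU_toU] at this

/-- a single subbasic compact-open set around `f` contains a canonical constraint set. -/
lemma subbasic_refine {φ : ℕ → ℕ} (hφ : FTO φ) {f : C(OmegaStar, OmegaStar)}
    (hf : IsRestrictionOfBetaExtend φ f) {K : Set OmegaStar} {U : Set OmegaStar}
    (hK : IsCompact K) (hU : IsOpen U) (hfKU : Set.MapsTo f K U) :
    ∃ A : Set ℕ, ∀ g : C(OmegaStar, OmegaStar),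
      Set.MapsTo g (BB A) (BB (φ '' A)) → Set.MapsTo g K U := by
  classical
  -- for each x ∈ K choose a basic set
  have hchoice : ∀ x : OmegaStar, ∃ A : Set ℕ,
      x ∈ K → (A ∈ toU x.1 ∧ BB A ⊆ f ⁻¹' U) := by
    intro x
    by_cases hx : x ∈ K
    · obtain ⟨A, hA1, hA2⟩ := exists_BB_subset (hU.preimage f.continuous) (hfKU hx)
      exact ⟨A, fun _ => ⟨hA1, hA2⟩⟩
    · exact ⟨∅, fun h => absurd h hx⟩
  choose Ax hAx using hchoice
  have hcover : K ⊆ ⋃ x ∈ K, BB (Ax x) := by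
    intro x hx
    exact Set.mem_biUnion hx (hAx x hx).1
  obtain ⟨t, hts, htfin, htcover⟩ :=
    hK.elim_finite_subcover_image (fun x _ => isOpen_BB (Ax x)) hcover
  set A : Set ℕ := ⋃ x ∈ t, Ax x with hA
  refine ⟨A, ?_⟩
  have hKBB : K ⊆ BB A := by
    intro z hz
    obtain ⟨x, hxt, hzx⟩ := Set.mem_iUnion₂.1 (htcover hz)
    exact Filter.mem_of_superset hzx (Set.subset_biUnion_of_mem hxt)
  have hfBB : Set.MapsTo f (BB A) U := by
    intro z hz
    have : (⋃ x ∈ t, Ax x) ∈ toU z.1 := hz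
    rw [Ultrafilter.finite_biUnion_mem_iff htfin] at this
    obtain ⟨x, hxt, hzx⟩ := this
    exact (hAx x (hts hxt)).2 hzx
  intro g hg z hz
  have h1 : g z ∈ BB (φ '' A) := hg (hKBB hz)
  obtain ⟨w, hw, hweq⟩ := BB_image_subset hφ hf A h1
  rw [← hweq]
  exact hfBB hw

/-- neighborhood basis of constraint lists at a restriction map. -/
lemma nbhd_basis {φ : ℕ → ℕ} (hφ : FTO φ) {f : C(OmegaStar, OmegaStar)}
    (hf : IsRestrictionOfBetaExtend φ f) {W : Set C(OmegaStar, OmegaStar)}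
    (hW : IsOpen W) (hfW : f ∈ W) :
    ∃ L : List (Set ℕ), ∀ g : C(OmegaStar, OmegaStar),
      (∀ A ∈ L, Set.MapsTo g (BB A) (BB (φ '' A))) → g ∈ W := by
  classical
  obtain ⟨b, ⟨t, ⟨htfin, htsub⟩, rfl⟩, hfb, hbW⟩ :=
    (TopologicalSpace.isTopologicalBasis_of_subbasis
      (ContinuousMap.compactOpen_eq (X := OmegaStar) (Y := OmegaStar))).exists_subset_of_mem_open
      hfW hW
  have hstep : ∀ s : Set C(OmegaStar, OmegaStar), ∃ A : Set ℕ, s ∈ t →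
      ∀ g : C(OmegaStar, OmegaStar), Set.MapsTo g (BB A) (BB (φ '' A)) → g ∈ s := by
    intro s
    by_cases hs : s ∈ t
    · obtain ⟨K, hK, U, hU, rfl⟩ := htsub hs
      have hfs : Set.MapsTo f K U := Set.mem_sInter.1 hfb _ hs
      obtain ⟨A, hA⟩ := subbasic_refine hφ hf hK hU hfs
      exact ⟨A, fun _ => hA⟩
    · exact ⟨∅, fun h => absurd h hs⟩
  choose As hAs using hstep
  refine ⟨htfin.toFinset.toList.map As, ?_⟩
  intro g hg
  apply hbW
  intro s hs
  refine hAs s hs g (hg (As s) ?_)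
  simp only [List.mem_map]
  exact ⟨s, by simpa using hs, rfl⟩

section Comb
open Classical

variable (A C : ℕ → Set ℕ)

/-- greedy selection of satisfiable constraints for the element `m`. -/
noncomputable def Tm (m : ℕ) : ℕ → Finset ℕ
  | 0 => ∅
  | k+1 => if m ∈ A k ∧ (⋂ j ∈ insert k (Tm m k), C j).Infinite
      then insert k (Tm m k) else Tm m k

lemma Tm_infinite (m k : ℕ) : (⋂ j ∈ Tm A C m k, C j).Infinite := by
  induction k with
  | zero => simpa [Tm] using Set.infinite_univ
  | succ k ih =>
      rw [Tm]
      by_cases h : m ∈ A k ∧ (⋂ j ∈ insert k (Tm A C m k), C j).Infinite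
      · rw [if_pos h]; exact h.2
      · rw [if_neg h]; exact ih

lemma Tm_mem (m k : ℕ) : ∀ j ∈ Tm A C m k, m ∈ A j ∧ j < k := by
  induction k with
  | zero => simp [Tm]
  | succ k ih =>
      intro j hj
      rw [Tm] at hj
      split at hj
      · next h =>
          rcases Finset.mem_insert.1 hj with rfl | hj
          · exact ⟨h.1, Nat.lt_succ_self _⟩
          · exact ⟨(ih j hj).1, (ih j hj).2.trans (Nat.lt_succ_self _)⟩
      · exact ⟨(ih j hj).1, (ih j hj).2.trans (Nat.lt_succ_self _)⟩

lemma Tm_mono (m : ℕ) {k k' : ℕ} (h : k ≤ k') : Tm A C m k ⊆ Tm A C m k' := by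
  induction k', h using Nat.le_induction with
  | base => exact subset_rfl
  | succ k' _ ih =>
      refine ih.trans ?_
      rw [Tm]
      split
      · exact Finset.subset_insert _ _
      · exact subset_rfl

lemma Tm_not_mem {m k K : ℕ} (hkK : k < K) (hm : m ∈ A k) (hk : k ∉ Tm A C m K) :
    ¬ (⋂ j ∈ insert k (Tm A C m k), C j).Infinite := by
  intro hinf
  apply hk
  apply Tm_mono A C m hkK
  rw [Tm, if_pos ⟨hm, hinf⟩]
  exact Finset.mem_insert_self _ _

/-- the greedy strictly monotone selector. -/
noncomputable def phiC : ℕ → ℕ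
  | 0 => sInf (⋂ j ∈ Tm A C 0 1, C j)
  | m+1 => sInf {x ∈ ⋂ j ∈ Tm A C (m+1) (m+2), C j | phiC m < x}

lemma phiC_mem_succ (m : ℕ) :
    phiC A C (m+1) ∈ ⋂ j ∈ Tm A C (m+1) (m+2), C j ∧ phiC A C m < phiC A C (m+1) := by
  have hne : {x ∈ ⋂ j ∈ Tm A C (m+1) (m+2), C j | phiC A C m < x}.Nonempty := by
    obtain ⟨b, hb, hlt⟩ := (Tm_infinite A C (m+1) (m+2)).exists_gt (phiC A C m)
    exact ⟨b, hb, hlt⟩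
  have := Nat.sInf_mem hne
  exact ⟨this.1, this.2⟩

lemma phiC_mem (m : ℕ) : phiC A C m ∈ ⋂ j ∈ Tm A C m (m+1), C j := by
  cases m with
  | zero => exact Nat.sInf_mem (Tm_infinite A C 0 1).nonempty
  | succ m => exact (phiC_mem_succ A C m).1

lemma phiC_strictMono : StrictMono (phiC A C) :=
  strictMono_nat_of_lt_succ fun m => (phiC_mem_succ A C m).2

/-- the combinatorial construction lemma. -/
theorem comb_main
    (H : ∀ T : Finset ℕ, (⋂ k ∈ T, A k).Infinite → (⋂ k ∈ T, C k).Infinite) :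
    ∃ φ : ℕ → ℕ, StrictMono φ ∧ ∀ k, (φ '' A k \ C k).Finite := by
  refine ⟨phiC A C, phiC_strictMono A C, fun k => ?_⟩
  have hbad : {m | m ∈ A k ∧ phiC A C m ∉ C k} ⊆ Set.Iic k ∪
      ⋃ T ∈ (Finset.range k).powerset, (if (⋂ j ∈ insert k T, C j).Infinite
        then (∅ : Set ℕ) else ⋂ j ∈ insert k T, A j) := by
    rintro m ⟨hmA, hmC⟩
    by_cases hmk : m ≤ k
    · exact Or.inl hmk
    push_neg at hmk
    right
    have hkm : k < m + 1 := Nat.lt_succ_of_lt hmk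
    have hknot : k ∉ Tm A C m (m+1) := by
      intro hk
      apply hmC
      have := phiC_mem A C m
      rw [Set.mem_iInter₂] at this
      exact this k hk
    have hfin := Tm_not_mem A C hkm hmA hknot
    refine Set.mem_iUnion₂.2 ⟨Tm A C m k, ?_, ?_⟩
    · rw [Finset.mem_powerset]
      intro j hj
      exact Finset.mem_range.2 ((Tm_mem A C m k j hj).2)
    · rw [if_neg hfin]
      rw [Set.mem_iInter₂]
      intro j hj
      rcases Finset.mem_insert.1 hj with rfl | hj
      · exact hmA
      · exact (Tm_mem A C m k j hj).1
  have hbadfin : {m | m ∈ A k ∧ phiC A C m ∉ C k}.Finite := by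
    refine Set.Finite.subset (Set.Finite.union (Set.finite_Iic k) ?_) hbad
    refine Set.Finite.biUnion ((Finset.range k).powerset.finite_toSet) ?_
    intro T _
    split
    · exact Set.finite_empty
    · next h =>
        rw [← Set.not_infinite]
        intro hAinf
        exact h (H _ hAinf)
  refine Set.Finite.subset (hbadfin.image (phiC A C)) ?_
  rintro y ⟨⟨m, hm, rfl⟩, hc⟩
  exact ⟨m, ⟨hm, hc⟩, rfl⟩

end Comb

def inCyl (ψ : ℕ → ℕ) (L : List (Set ℕ)) (g : C(OmegaStar, OmegaStar)) : Prop :=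
  ∀ A ∈ L, Set.MapsTo g (BB A) (BB (ψ '' A))

lemma isOpen_inCyl (ψ : ℕ → ℕ) (L : List (Set ℕ)) : IsOpen {g | inCyl ψ L g} := by
  have : {g | inCyl ψ L g} =
      ⋂ A ∈ {a | a ∈ L}, {g : C(OmegaStar, OmegaStar) | Set.MapsTo g (BB A) (BB (ψ '' A))} := by
    ext g
    simp [inCyl, Set.mem_iInter₂]
  rw [this]
  exact Set.Finite.isOpen_biInter L.finite_toSet fun A _ =>
    ContinuousMap.isOpen_setOf_mapsTo (isCompact_BB A) (isOpen_BB _)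

lemma rmap_inCyl {ψ : ℕ → ℕ} (hψ : FTO ψ) (L : List (Set ℕ)) : inCyl ψ L (rmap hψ) :=
  fun A _ => (mapsTo_BB_iff hψ (isRestriction_rmap hψ) A _).2 (by simp)

lemma inCyl_of_mapsTo {ψ φ' : ℕ → ℕ} (hφ' : FTO φ') {g : C(OmegaStar, OmegaStar)}
    (hg : IsRestrictionOfBetaExtend φ' g) (L : List (Set ℕ))
    (h : ∀ A ∈ L, (φ' '' A \ ψ '' A).Finite) : inCyl ψ L g :=
  fun A hA => (mapsTo_BB_iff hφ' hg A _).2 (h A hA)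

theorem main_baire (P : (ℕ → ℕ) → Prop) (hPfto : ∀ φ, P φ → FTO φ)
    (hPinj : ∀ φ, Function.Injective φ → P φ) :
    BaireSpace ↥{f : C(OmegaStar, OmegaStar) | ∃ φ, P φ ∧ IsRestrictionOfBetaExtend φ f} := by
  classical
  set SS := {f : C(OmegaStar, OmegaStar) | ∃ φ, P φ ∧ IsRestrictionOfBetaExtend φ f} with hSS
  constructor
  intro D hDo hDd
  rw [dense_iff_inter_open]
  rintro V hV ⟨g₀, hg₀⟩
  obtain ⟨U', hU'o, hU'p⟩ := isOpen_induced_iff.1 hV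
  have hDE : ∀ n, ∃ E, IsOpen E ∧ Subtype.val ⁻¹' E = D n := fun n =>
    isOpen_induced_iff.1 (hDo n)
  choose DE hDEo hDEp using hDE
  obtain ⟨φ₀, hPφ₀, hres₀⟩ := g₀.2
  have hg₀U' : (g₀ : C(OmegaStar, OmegaStar)) ∈ U' := by
    rw [← hU'p] at hg₀; exact hg₀
  obtain ⟨L₀, hL₀⟩ := nbhd_basis (hPfto _ hPφ₀) hres₀ hU'o hg₀U'
  -- the step
  set St := {p : (ℕ → ℕ) × List (Set ℕ) // P p.1} with hSt
  have hstep : ∀ (σ : St) (n : ℕ), ∃ σ' : St,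
      ∀ g, inCyl σ'.1.1 σ'.1.2 g → g ∈ DE n ∧ inCyl σ.1.1 σ.1.2 g := by
    rintro ⟨⟨ψ, L⟩, hPψ⟩ n
    have hfto := hPfto _ hPψ
    -- the canonical point lies in the cylinder
    have hptS : rmap hfto ∈ SS := ⟨ψ, hPψ, isRestriction_rmap _⟩
    set pt : ↥SS := ⟨rmap hfto, hptS⟩ with hpt
    have hOopen : IsOpen (Subtype.val ⁻¹' {g | inCyl ψ L g} : Set ↥SS) :=
      (isOpen_inCyl ψ L).preimage continuous_subtype_val
    have hptO : pt ∈ (Subtype.val ⁻¹' {g | inCyl ψ L g} : Set ↥SS) := rmap_inCyl hfto L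
    obtain ⟨q, hqO, hqD⟩ := (hDd n).inter_open_nonempty _ hOopen ⟨pt, hptO⟩
    obtain ⟨φ', hPφ', hres'⟩ := q.2
    have hW : IsOpen (DE n ∩ {g | inCyl ψ L g}) := (hDEo n).inter (isOpen_inCyl ψ L)
    have hqW : (q : C(OmegaStar, OmegaStar)) ∈ DE n ∩ {g | inCyl ψ L g} := by
      constructor
      · rw [← hDEp n] at hqD; exact hqD
      · exact hqO
    obtain ⟨L', hL'⟩ := nbhd_basis (hPfto _ hPφ') hres' hW hqW
    refine ⟨⟨(φ', L'), hPφ'⟩, fun g hg => ?_⟩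
    exact hL' g hg
  choose F hF using hstep
  set σ₀ : St := ⟨(φ₀, L₀), hPφ₀⟩ with hσ₀
  set seq : ℕ → St := fun n => Nat.rec σ₀ (fun m σ => F σ m) n with hseqdef
  have hseq : ∀ n g, inCyl (seq (n+1)).1.1 (seq (n+1)).1.2 g →
      g ∈ DE n ∧ inCyl (seq n).1.1 (seq n).1.2 g := fun n => hF (seq n) n
  have hchain : ∀ n m, n ≤ m → ∀ g, inCyl (seq m).1.1 (seq m).1.2 g →
      inCyl (seq n).1.1 (seq n).1.2 g := by
    intro n m hnm
    induction m, hnm using Nat.le_induction with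
    | base => exact fun g h => h
    | succ m hnm ih => exact fun g h => ih g (hseq m g h).2
  -- global constraint system
  set Aseq : ℕ → Set ℕ := fun k => ((seq k.unpair.1).1.2).getD k.unpair.2 ∅ with hAseq
  set Cseq : ℕ → Set ℕ := fun k => (seq k.unpair.1).1.1 '' Aseq k with hCseq
  have Hsys : ∀ T : Finset ℕ, (⋂ k ∈ T, Aseq k).Infinite → (⋂ k ∈ T, Cseq k).Infinite := by
    intro T hT
    set N := T.sup id with hN
    have hftoN := hPfto _ (seq N).2
    have hkfin : ∀ k ∈ T, ((seq N).1.1 '' Aseq k \ Cseq k).Finite := by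
      intro k hk
      by_cases hlen : k.unpair.2 < ((seq k.unpair.1).1.2).length
      · have hmem : Aseq k ∈ (seq k.unpair.1).1.2 := by
          rw [hAseq]
          simp only
          rw [List.getD_eq_getElem _ _ hlen]
          exact List.getElem_mem _
        have hnN : k.unpair.1 ≤ N := le_trans (Nat.unpair_left_le k) (Finset.le_sup (f := id) hk)
        have hcy : inCyl (seq k.unpair.1).1.1 (seq k.unpair.1).1.2 (rmap hftoN) :=
          hchain _ _ hnN _ (rmap_inCyl hftoN _)
        have := hcy (Aseq k) hmem
        exact (mapsTo_BB_iff hftoN (isRestriction_rmap hftoN) (Aseq k) _).1 this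
      · have : Aseq k = ∅ := by
          rw [hAseq]
          simp only
          rw [List.getD_eq_default _ _ (le_of_not_gt hlen)]
        simp [this]
    have h1 : ((seq N).1.1 '' (⋂ k ∈ T, Aseq k)).Infinite := hftoN.image_infinite hT
    have h2 : ((seq N).1.1 '' (⋂ k ∈ T, Aseq k)) \
        (⋃ k ∈ T, ((seq N).1.1 '' Aseq k \ Cseq k)) ⊆ ⋂ k ∈ T, Cseq k := by
      rintro y ⟨⟨a, ha, rfl⟩, hnd⟩
      rw [Set.mem_iInter₂]
      intro k hk
      by_contra hyc
      apply hnd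
      refine Set.mem_iUnion₂.2 ⟨k, hk, ⟨⟨a, ?_, rfl⟩, hyc⟩⟩
      exact Set.mem_iInter₂.1 ha k hk
    have h3 : (⋃ k ∈ T, ((seq N).1.1 '' Aseq k \ Cseq k)).Finite :=
      Set.Finite.biUnion T.finite_toSet hkfin
    exact ((h1.diff h3).mono h2)
  obtain ⟨φf, hφmono, hφfin⟩ := comb_main Aseq Cseq Hsys
  have hφinj := hφmono.injective
  have hφfto := FTO.of_injective hφinj
  have hginC : ∀ n, inCyl (seq n).1.1 (seq n).1.2 (rmap hφfto) := by
    intro n A hA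
    obtain ⟨i, hi, hgetEq⟩ := List.mem_iff_getElem.1 hA
    have hAk : Aseq (Nat.pair n i) = A := by
      rw [hAseq]
      simp only [Nat.unpair_pair]
      rw [List.getD_eq_getElem _ _ hi]
      exact hgetEq
    have hCk : Cseq (Nat.pair n i) = (seq n).1.1 '' A := by
      rw [hCseq]
      simp only [Nat.unpair_pair]
      rw [hAk]
    have := hφfin (Nat.pair n i)
    rw [hAk, hCk] at this
    exact (mapsTo_BB_iff hφfto (isRestriction_rmap hφfto) A _).2 this
  have hmemSS : rmap hφfto ∈ SS := ⟨φf, hPinj _ hφinj, isRestriction_rmap _⟩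
  refine ⟨⟨rmap hφfto, hmemSS⟩, ?_, ?_⟩
  · rw [← hU'p]
    exact hL₀ _ (hginC 0)
  · rw [Set.mem_iInter]
    intro n
    rw [← hDEp n]
    exact (hseq n _ (hginC (n+1))).1


/-- Both the subspace of `C_k(ω*, ω*)` of restrictions of Stone–Čech extensions of injective
maps `ℕ → ℕ`, and the subspace of restrictions of Stone–Čech extensions of finite-to-one maps
`ℕ → ℕ`, are Baire spaces. -/
theorem baireSpace_injective_and_finiteToOne_extensions :
    BaireSpace {f : C(OmegaStar, OmegaStar) |
        ∃ φ : ℕ → ℕ, Function.Injective φ ∧ IsRestrictionOfBetaExtend φ f} ∧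
    BaireSpace {f : C(OmegaStar, OmegaStar) |
        ∃ φ : ℕ → ℕ, (∀ m : ℕ, (φ ⁻¹' {m}).Finite) ∧ IsRestrictionOfBetaExtend φ f} := by
  constructor
  · exact main_baire (fun φ => Function.Injective φ) (fun φ h => FTO.of_injective h)
      (fun φ h => h)
  · exact main_baire (fun φ => ∀ m : ℕ, (φ ⁻¹' {m}).Finite) (fun φ h => h)
      (fun φ h => FTO.of_injective h)
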